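/- If D is a sharp domain in which every t-ideal is a v-ideal (a TV domain), then D is a Dedekind domain. -/

import Mathlib

/-- A domain `R` is *sharp* if whenever `I ⊇ A*B` with `I, A, B` nonzero ideals,
there exist ideals `A' ⊇ A` and `B' ⊇ B` such that `I = A'*B'`. -/
def IsSharpDomain (R : Type*) [CommRing R] : Prop :=
  ∀ I A B : Ideal R, I ≠ ⊥ → A ≠ ⊥ → B ≠ ⊥ → A * B ≤ I →
    ∃ A' B' : Ideal R, A ≤ A' ∧ B ≤ B' ∧ I = A' * B'

/-- The `t`-closure of an ideal `I`: the union of the `v`-closures `(J⁻¹)⁻¹` of the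
nonzero finitely generated subideals `J` of `I`, as a submodule of the fraction field. -/
noncomputable def tClosure (R : Type*) [CommRing R] [IsDomain R] (I : Ideal R) :
    Submodule R (FractionRing R) :=
  ⨆ J ∈ {J : Ideal R | J.FG ∧ J ≠ ⊥ ∧ J ≤ I},
    (((((J : Ideal R) : FractionalIdeal (nonZeroDivisors R) (FractionRing R))⁻¹)⁻¹ :
      FractionalIdeal (nonZeroDivisors R) (FractionRing R)) : Submodule R (FractionRing R))

open FractionalIdeal

namespace SharpTVAux

variable {R : Type*} [CommRing R] [IsDomain R]

local notation "K" => FractionRing R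
local notation "F" => FractionalIdeal (nonZeroDivisors R) (FractionRing R)

lemma invE (X : F) : X⁻¹ = 1 / X := FractionalIdeal.inv_eq (I := X)

lemma one_le_inv_of_coeIdeal {I : Ideal R} (hI : I ≠ ⊥) : (1 : F) ≤ ((I : F))⁻¹ := by
  rw [invE, FractionalIdeal.le_div_iff_mul_le (coeIdeal_ne_zero.mpr hI), one_mul]
  exact coeIdeal_le_one

lemma inv_ne_zero_of_coeIdeal {I : Ideal R} (hI : I ≠ ⊥) : ((I : F))⁻¹ ≠ 0 := by
  intro h0
  have h1 := one_le_inv_of_coeIdeal (R := R) hI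
  rw [h0] at h1
  exact one_ne_zero (le_antisymm h1 (zero_le _))

lemma inv_mul_self_le_one {X : F} (hX : X ≠ 0) : X⁻¹ * X ≤ 1 :=
  (FractionalIdeal.le_div_iff_mul_le (J := (1 : F)) (I := X⁻¹) hX).mp (le_of_eq (invE X))

lemma mul_inv_self_le_one {X : F} (hX : X ≠ 0) : X * X⁻¹ ≤ 1 := by
  rw [mul_comm]; exact inv_mul_self_le_one hX

lemma le_v {X : F} (hX : X ≠ 0) (hXinv : X⁻¹ ≠ 0) : X ≤ (X⁻¹)⁻¹ := by
  rw [invE X⁻¹, FractionalIdeal.le_div_iff_mul_le hXinv]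
  exact mul_inv_self_le_one hX

lemma span_mul_ne_zero {a : K} (ha : a ≠ 0) {X : F} (hX : X ≠ 0) :
    spanSingleton (nonZeroDivisors R) a * X ≠ 0 := by
  intro h0
  apply hX
  calc X = (spanSingleton (nonZeroDivisors R) a⁻¹ * spanSingleton (nonZeroDivisors R) a) * X := by
        rw [spanSingleton_mul_spanSingleton, inv_mul_cancel₀ ha, spanSingleton_one, one_mul]
    _ = spanSingleton (nonZeroDivisors R) a⁻¹ * (spanSingleton (nonZeroDivisors R) a * X) :=
        mul_assoc _ _ _
    _ = 0 := by rw [h0, mul_zero]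

lemma span_mul_inv {a : K} (ha : a ≠ 0) {X : F} (hX : X ≠ 0) :
    (spanSingleton (nonZeroDivisors R) a * X)⁻¹ =
      spanSingleton (nonZeroDivisors R) a⁻¹ * X⁻¹ := by
  have hprod : spanSingleton (nonZeroDivisors R) a * X ≠ 0 := span_mul_ne_zero ha hX
  apply le_antisymm
  · have h1 : (spanSingleton (nonZeroDivisors R) a * X)⁻¹ * (spanSingleton (nonZeroDivisors R) a * X) ≤ 1 :=
      inv_mul_self_le_one hprod
    have h3 : (spanSingleton (nonZeroDivisors R) a * X)⁻¹ * spanSingleton (nonZeroDivisors R) a ≤ X⁻¹ := by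
      rw [invE X, FractionalIdeal.le_div_iff_mul_le hX]
      calc ((spanSingleton (nonZeroDivisors R) a * X)⁻¹ * spanSingleton (nonZeroDivisors R) a) * X
          = (spanSingleton (nonZeroDivisors R) a * X)⁻¹ * (spanSingleton (nonZeroDivisors R) a * X) := by ring
        _ ≤ 1 := h1
    calc (spanSingleton (nonZeroDivisors R) a * X)⁻¹
        = ((spanSingleton (nonZeroDivisors R) a * X)⁻¹ * spanSingleton (nonZeroDivisors R) a) *
            spanSingleton (nonZeroDivisors R) a⁻¹ := by
          rw [mul_assoc, spanSingleton_mul_spanSingleton, mul_inv_cancel₀ ha, spanSingleton_one,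
            mul_one]
      _ ≤ X⁻¹ * spanSingleton (nonZeroDivisors R) a⁻¹ := mul_left_mono h3
      _ = spanSingleton (nonZeroDivisors R) a⁻¹ * X⁻¹ := mul_comm _ _
  · rw [invE (spanSingleton (nonZeroDivisors R) a * X), FractionalIdeal.le_div_iff_mul_le hprod]
    calc (spanSingleton (nonZeroDivisors R) a⁻¹ * X⁻¹) * (spanSingleton (nonZeroDivisors R) a * X)
        = (spanSingleton (nonZeroDivisors R) a⁻¹ * spanSingleton (nonZeroDivisors R) a) * (X⁻¹ * X) := by
          ring
      _ = 1 * (X⁻¹ * X) := by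
          rw [spanSingleton_mul_spanSingleton, inv_mul_cancel₀ ha, spanSingleton_one]
      _ = X⁻¹ * X := one_mul _
      _ ≤ 1 := inv_mul_self_le_one hX

/-- Pseudo-Dedekind: in a sharp domain, the `v`-closure of any nonzero ideal is invertible. -/
lemma v_isUnit (h : IsSharpDomain R) {I : Ideal R} (hI : I ≠ ⊥) :
    IsUnit (((I : F))⁻¹)⁻¹ := by
  obtain ⟨c, hcI, hc0⟩ := (Submodule.ne_bot_iff I).mp hI
  have inj : Function.Injective (algebraMap R K) := IsFractionRing.injective R K
  have hcalg : algebraMap R K c ≠ 0 := fun h0 => hc0 (inj (by simpa using h0))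
  set B0 : Ideal R := Submodule.colon (Ideal.span {c}) I with hB0def
  have hcB0 : c ∈ B0 := Submodule.mem_colon.mpr fun p hp =>
    Ideal.mem_span_singleton'.mpr ⟨p, by rw [smul_eq_mul, mul_comm]⟩
  have hB0ne : B0 ≠ ⊥ := fun hb => hc0 (by rw [hb] at hcB0; simpa using hcB0)
  have hmul : I * B0 ≤ Ideal.span {c} := by
    rw [Ideal.mul_le]
    intro r hr s hs
    have := Submodule.mem_colon.mp hs r hr
    rwa [smul_eq_mul, mul_comm] at this
  obtain ⟨A', B', hIA, hBB, hfac⟩ := h (Ideal.span {c}) I B0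
    (by simpa [Ideal.span_singleton_eq_bot] using hc0) hI hB0ne hmul
  have hfacF : (A' : F) * (B' : F) = spanSingleton (nonZeroDivisors R) (algebraMap R K c) := by
    rw [← coeIdeal_mul, ← hfac, coeIdeal_span_singleton]
  have hspanu : IsUnit (spanSingleton (nonZeroDivisors R) (algebraMap R K c)) :=
    IsUnit.of_mul_eq_one (spanSingleton (nonZeroDivisors R) (algebraMap R K c)⁻¹)
      (by rw [spanSingleton_mul_spanSingleton, mul_inv_cancel₀ hcalg, spanSingleton_one])
  have hABu : IsUnit ((A' : F) * (B' : F)) := hfacF.symm ▸ hspanu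
  have hA'u : IsUnit (A' : F) := isUnit_of_mul_isUnit_left hABu
  have hB'u : IsUnit (B' : F) := isUnit_of_mul_isUnit_left (by rwa [mul_comm] at hABu)
  have hA'1 : (A' : F) * (A' : F)⁻¹ = 1 := (mul_inv_cancel_iff_isUnit _).mpr hA'u
  have hB'1 : (B' : F) * (B' : F)⁻¹ = 1 := (mul_inv_cancel_iff_isUnit _).mpr hB'u
  have hA'ne : (A' : F) ≠ 0 := ne_zero_of_mul_eq_one _ _ hA'1
  have hB'ne : (B' : F) ≠ 0 := ne_zero_of_mul_eq_one _ _ hB'1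
  have hA'invne : (A' : F)⁻¹ ≠ 0 := ne_zero_of_mul_eq_one _ _ (by rw [mul_comm]; exact hA'1)
  have hIne : (I : F) ≠ 0 := coeIdeal_ne_zero.mpr hI
  have hIinvne : ((I : F))⁻¹ ≠ 0 := inv_ne_zero_of_coeIdeal hI
  have hA'div : ((A' : F)⁻¹)⁻¹ = (A' : F) :=
    (right_inverse_eq _ ((A' : F)⁻¹) (A' : F) (by rw [mul_comm]; exact hA'1)).symm
  -- v(I) ≤ A'
  have hle1 : ((I : F))⁻¹⁻¹ ≤ (A' : F) := by
    have h1 : (I : F) ≤ (A' : F) := (coeIdeal_le_coeIdeal _).mpr hIA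
    have h2 : (A' : F)⁻¹ ≤ (I : F)⁻¹ := inv_anti_mono hIne hA'ne h1
    have h3 := inv_anti_mono hA'invne hIinvne h2
    rwa [hA'div] at h3
  -- span c * I⁻¹ ≤ B0 (hence ≤ B')
  have hkey : spanSingleton (nonZeroDivisors R) (algebraMap R K c) * ((I : F))⁻¹ ≤ (B0 : F) := by
    intro y hy
    obtain ⟨z, hz, rfl⟩ := mem_singleton_mul.mp hy
    have hz1 : z * algebraMap R K c ∈ (1 : F) :=
      (mem_inv_iff hIne).mp hz _ (mem_coeIdeal_of_mem _ hcI)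
    obtain ⟨r, hr⟩ := (mem_one_iff _).mp hz1
    refine (mem_coeIdeal _).mpr ⟨r, ?_, by rw [hr, mul_comm]⟩
    refine Submodule.mem_colon.mpr fun p hp => ?_
    have hzp : z * algebraMap R K p ∈ (1 : F) :=
      (mem_inv_iff hIne).mp hz _ (mem_coeIdeal_of_mem _ hp)
    obtain ⟨s, hs⟩ := (mem_one_iff _).mp hzp
    have : algebraMap R K (r * p) = algebraMap R K (s * c) := by
      rw [_root_.map_mul, _root_.map_mul, hr, hs]
      ring
    rw [smul_eq_mul, inj this]
    exact Ideal.mem_span_singleton'.mpr ⟨s, rfl⟩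
  have hkeyne : spanSingleton (nonZeroDivisors R) (algebraMap R K c) * ((I : F))⁻¹ ≠ 0 :=
    span_mul_ne_zero hcalg hIinvne
  have hB'ge : spanSingleton (nonZeroDivisors R) (algebraMap R K c) * ((I : F))⁻¹ ≤ (B' : F) :=
    le_trans hkey ((coeIdeal_le_coeIdeal _).mpr hBB)
  have h5 : (B' : F)⁻¹ ≤ (spanSingleton (nonZeroDivisors R) (algebraMap R K c) * ((I : F))⁻¹)⁻¹ :=
    inv_anti_mono hkeyne hB'ne hB'ge
  rw [span_mul_inv hcalg hIinvne] at h5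
  have hA'eq : (A' : F) = spanSingleton (nonZeroDivisors R) (algebraMap R K c) * (B' : F)⁻¹ := by
    calc (A' : F) = (A' : F) * ((B' : F) * (B' : F)⁻¹) := by rw [hB'1, mul_one]
      _ = ((A' : F) * (B' : F)) * (B' : F)⁻¹ := by ring
      _ = spanSingleton (nonZeroDivisors R) (algebraMap R K c) * (B' : F)⁻¹ := by rw [hfacF]
  have hle2 : (A' : F) ≤ ((I : F))⁻¹⁻¹ := by
    rw [hA'eq]
    calc spanSingleton (nonZeroDivisors R) (algebraMap R K c) * (B' : F)⁻¹
        ≤ spanSingleton (nonZeroDivisors R) (algebraMap R K c) *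
            (spanSingleton (nonZeroDivisors R) (algebraMap R K c)⁻¹ * ((I : F))⁻¹⁻¹) :=
          mul_right_mono h5
      _ = (spanSingleton (nonZeroDivisors R) (algebraMap R K c) *
            spanSingleton (nonZeroDivisors R) (algebraMap R K c)⁻¹) * ((I : F))⁻¹⁻¹ := by ring
      _ = ((I : F))⁻¹⁻¹ := by
          rw [spanSingleton_mul_spanSingleton, mul_inv_cancel₀ hcalg, spanSingleton_one, one_mul]
  have hveq : ((I : F))⁻¹⁻¹ = (A' : F) := le_antisymm hle1 hle2
  rw [hveq]
  exact hA'u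

end SharpTVAux

namespace SharpTVAux2
open SharpTVAux

variable {R : Type*} [CommRing R] [IsDomain R]

local notation "K" => FractionRing R
local notation "F" => FractionalIdeal (nonZeroDivisors R) (FractionRing R)

lemma half (h : IsSharpDomain R) {P Q : Ideal R}
    (hPu : IsUnit ((P : F))) (hQu : IsUnit ((Q : F)))
    (hPQ : (((P ⊔ Q : Ideal R) : F))⁻¹ ≤ 1) :
    Q ≤ (P ⊔ Q) * (P ⊔ Q) := by
  have inj : Function.Injective (algebraMap R K) := IsFractionRing.injective R K
  have hP1 : (P : F) * (P : F)⁻¹ = 1 := (mul_inv_cancel_iff_isUnit _).mpr hPu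
  have hQ1 : (Q : F) * (Q : F)⁻¹ = 1 := (mul_inv_cancel_iff_isUnit _).mpr hQu
  have hPne' : (P : F) ≠ 0 := ne_zero_of_mul_eq_one _ _ hP1
  have hQne' : (Q : F) ≠ 0 := ne_zero_of_mul_eq_one _ _ hQ1
  have hPne : P ≠ ⊥ := coeIdeal_ne_zero.mp hPne'
  have hQne : Q ≠ ⊥ := coeIdeal_ne_zero.mp hQne'
  have hPQbot : (P ⊔ Q : Ideal R) ≠ ⊥ := fun h0 =>
    hQne (eq_bot_iff.mpr (h0 ▸ le_sup_right (a := P) (b := Q)))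
  -- step (b)
  have hinter : ((Q : F) * (P : F)⁻¹) ⊓ 1 ≤ (Q : F) := by
    set X := ((Q : F) * (P : F)⁻¹) ⊓ 1 with hXdef
    have h1 : X * (Q : F)⁻¹ ≤ (P : F)⁻¹ := by
      calc X * (Q : F)⁻¹ ≤ ((Q : F) * (P : F)⁻¹) * (Q : F)⁻¹ := mul_left_mono inf_le_left
        _ = ((Q : F) * (Q : F)⁻¹) * (P : F)⁻¹ := by ring
        _ = (P : F)⁻¹ := by rw [hQ1, one_mul]
    have h2 : X * (Q : F)⁻¹ ≤ (Q : F)⁻¹ := by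
      calc X * (Q : F)⁻¹ ≤ 1 * (Q : F)⁻¹ := mul_left_mono inf_le_right
        _ = (Q : F)⁻¹ := one_mul _
    have h3 : (P : F)⁻¹ ⊓ (Q : F)⁻¹ ≤ (((P ⊔ Q : Ideal R) : F))⁻¹ := by
      rw [invE (((P ⊔ Q : Ideal R) : F)),
        FractionalIdeal.le_div_iff_mul_le (coeIdeal_ne_zero.mpr hPQbot), coeIdeal_sup,
        mul_add, ← sup_eq_add]
      apply sup_le
      · calc ((P : F)⁻¹ ⊓ (Q : F)⁻¹) * (P : F) ≤ (P : F)⁻¹ * (P : F) :=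
            mul_left_mono inf_le_left
          _ ≤ 1 := inv_mul_self_le_one hPne'
      · calc ((P : F)⁻¹ ⊓ (Q : F)⁻¹) * (Q : F) ≤ (Q : F)⁻¹ * (Q : F) :=
            mul_left_mono inf_le_right
          _ ≤ 1 := inv_mul_self_le_one hQne'
    have h4 : X * (Q : F)⁻¹ ≤ 1 := le_trans (le_inf h1 h2) (le_trans h3 hPQ)
    calc X = X * ((Q : F)⁻¹ * (Q : F)) := by rw [mul_comm ((Q : F))⁻¹, hQ1, mul_one]
      _ = (X * (Q : F)⁻¹) * (Q : F) := by ring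
      _ ≤ 1 * (Q : F) := mul_left_mono h4
      _ = (Q : F) := one_mul _
  -- sharp instance
  set I0 : Ideal R := P * P ⊔ Q with hI0
  have hI0ne : I0 ≠ ⊥ := fun h0 => hQne (eq_bot_iff.mpr (h0 ▸ le_sup_right (a := P * P) (b := Q)))
  obtain ⟨A', B', hPA, hPB, hfac⟩ := h I0 P P hI0ne hPne hPne le_sup_left
  have bound : ∀ X' Y' : Ideal R, P ≤ Y' → I0 = X' * Y' → X' ≤ P ⊔ Q := by
    intro X' Y' hPY' hfac' x hx
    have hxP : Ideal.span {x} * P ≤ I0 := by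
      rw [Ideal.mul_le]
      intro r hr p hp
      obtain ⟨t, ht⟩ := Ideal.mem_span_singleton'.mp hr
      have hxpI : x * p ∈ I0 := by rw [hfac']; exact Ideal.mul_mem_mul hx (hPY' hp)
      rw [← ht, mul_assoc]
      exact Ideal.mul_mem_left _ t hxpI
    have hxPF : spanSingleton (nonZeroDivisors R) (algebraMap R K x) * (P : F) ≤ (I0 : F) := by
      have h6 := (coeIdeal_le_coeIdeal K).mpr hxP
      rwa [coeIdeal_mul, coeIdeal_span_singleton] at h6
    have hspx : spanSingleton (nonZeroDivisors R) (algebraMap R K x) ≤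
        (P : F) ⊔ (Q : F) * (P : F)⁻¹ := by
      have h6 := mul_left_mono (a := (P : F)⁻¹) hxPF
      have hL : (spanSingleton (nonZeroDivisors R) (algebraMap R K x) * (P : F)) * (P : F)⁻¹ =
          spanSingleton (nonZeroDivisors R) (algebraMap R K x) := by
        rw [mul_assoc, hP1, mul_one]
      have hR : (I0 : F) * (P : F)⁻¹ ≤ (P : F) ⊔ (Q : F) * (P : F)⁻¹ := by
        rw [hI0, coeIdeal_sup, coeIdeal_mul, add_mul, ← sup_eq_add]
        apply sup_le
        · calc (P : F) * (P : F) * (P : F)⁻¹ = (P : F) * ((P : F) * (P : F)⁻¹) := by ring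
            _ = (P : F) := by rw [hP1, mul_one]
            _ ≤ _ := le_sup_left
        · exact le_sup_right
      calc spanSingleton (nonZeroDivisors R) (algebraMap R K x)
          = (spanSingleton (nonZeroDivisors R) (algebraMap R K x) * (P : F)) * (P : F)⁻¹ := hL.symm
        _ ≤ (I0 : F) * (P : F)⁻¹ := h6
        _ ≤ _ := hR
    have hmemsup : algebraMap R K x ∈ (P : F) ⊔ (Q : F) * (P : F)⁻¹ :=
      spanSingleton_le_iff_mem.mp hspx
    rw [← mem_coe, coe_sup] at hmemsup
    obtain ⟨pbar, hpbar, y, hy, hxy⟩ := Submodule.mem_sup.mp hmemsup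
    have hy1 : y ∈ ((1 : F) : Submodule R (FractionRing R)) := by
      have hx1 : algebraMap R K x ∈ ((1 : F) : Submodule R (FractionRing R)) := by
        rw [mem_coe]; exact coe_mem_one _ x
      have hp1 : pbar ∈ ((1 : F) : Submodule R (FractionRing R)) := by
        rw [mem_coe]; exact coeIdeal_le_one (mem_coe.mp hpbar)
      have hyeq : y = algebraMap R K x - pbar := by rw [← hxy]; ring
      rw [hyeq]; exact sub_mem hx1 hp1
    have hyQ : y ∈ (Q : F) := by
      have hyX : y ∈ ((Q : F) * (P : F)⁻¹ ⊓ 1 : F) := by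
        rw [← mem_coe, coe_inf]
        exact ⟨hy, hy1⟩
      exact hinter hyX
    have hxmem : algebraMap R K x ∈ ((P ⊔ Q : Ideal R) : F) := by
      rw [coeIdeal_sup, ← sup_eq_add, ← mem_coe, coe_sup]
      exact Submodule.mem_sup.mpr ⟨pbar, hpbar, y, (mem_coe (I := (Q : F))).mpr hyQ, hxy⟩
    obtain ⟨w, hw, hweq⟩ := (mem_coeIdeal _).mp hxmem
    rwa [← inj hweq]
  have hA : A' ≤ P ⊔ Q := bound A' B' hPB hfac
  have hB : B' ≤ P ⊔ Q := bound B' A' hPA (by rw [hfac, mul_comm])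
  calc Q ≤ I0 := le_sup_right
    _ = A' * B' := hfac
    _ ≤ (P ⊔ Q) * (P ⊔ Q) := Ideal.mul_mono hA hB

lemma sup_eq_top (h : IsSharpDomain R) {P Q : Ideal R}
    (hPu : IsUnit ((P : F))) (hQu : IsUnit ((Q : F)))
    (hPQ : (((P ⊔ Q : Ideal R) : F))⁻¹ ≤ 1) : P ⊔ Q = ⊤ := by
  have inj : Function.Injective (algebraMap R K) := IsFractionRing.injective R K
  have h1 : Q ≤ (P ⊔ Q) * (P ⊔ Q) := half h hPu hQu hPQ
  have h2 : P ≤ (P ⊔ Q) * (P ⊔ Q) := by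
    have h2' := half h hQu hPu (by rwa [sup_comm Q P])
    rwa [sup_comm Q P] at h2'
  have hidem : (P ⊔ Q) * (P ⊔ Q) = (P ⊔ Q) :=
    le_antisymm Ideal.mul_le_left (sup_le h2 h1)
  have hfg : (P ⊔ Q).FG :=
    Submodule.FG.sup (Ideal.fg_of_isUnit inj P hPu) (Ideal.fg_of_isUnit inj Q hQu)
  rcases (Ideal.isIdempotentElem_iff_eq_bot_or_top _ hfg).mp hidem with hbot | htop
  · exfalso
    have hPne : P ≠ ⊥ := coeIdeal_ne_zero.mp
      (ne_zero_of_mul_eq_one _ _ ((mul_inv_cancel_iff_isUnit _).mpr hPu))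
    exact hPne (eq_bot_iff.mpr (hbot ▸ le_sup_left (a := P) (b := Q)))
  · exact htop

end SharpTVAux2

namespace SharpTVAux3
open SharpTVAux SharpTVAux2

variable {R : Type*} [CommRing R] [IsDomain R]

local notation "K" => FractionRing R
local notation "F" => FractionalIdeal (nonZeroDivisors R) (FractionRing R)

/-- In a sharp domain, every nonzero finitely generated ideal is invertible. -/
lemma fg_isUnit (h : IsSharpDomain R) (J : Ideal R) (hJfg : J.FG) (hJne : J ≠ ⊥) :
    IsUnit ((J : F)) := by
  revert hJne
  refine Submodule.fg_induction (motive := fun (N : Submodule R R) _ => N ≠ ⊥ → IsUnit ((N : Ideal R) : F))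
    ?_ ?_ J hJfg
  · -- principal case
    intro x hx
    have hx0 : x ≠ 0 := by
      intro h0
      exact hx (by rw [h0, Ideal.submodule_span_eq, Ideal.span_singleton_eq_bot])
    have halg : algebraMap R K x ≠ 0 :=
      fun h0 => hx0 ((IsFractionRing.injective R K) (by simpa using h0))
    have : ((Submodule.span R {x} : Ideal R) : F) =
        spanSingleton (nonZeroDivisors R) (algebraMap R K x) := by
      rw [Ideal.submodule_span_eq, coeIdeal_span_singleton]
    rw [this]
    exact IsUnit.of_mul_eq_one (spanSingleton (nonZeroDivisors R) (algebraMap R K x)⁻¹)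
      (by rw [spanSingleton_mul_spanSingleton, mul_inv_cancel₀ halg, spanSingleton_one])
  · -- sup case
    intro T N _ _ hT hN hW
    by_cases hTb : T = ⊥
    · rw [hTb, bot_sup_eq] at hW ⊢
      exact hN hW
    by_cases hNb : N = ⊥
    · rw [hNb, sup_bot_eq] at hW ⊢
      exact hT hTb
    have hTu : IsUnit ((T : Ideal R) : F) := hT hTb
    have hNu : IsUnit ((N : Ideal R) : F) := hN hNb
    set W : Ideal R := (T ⊔ N : Submodule R R) with hWdef
    have hWne : W ≠ ⊥ := hW
    have hWne' : (W : F) ≠ 0 := coeIdeal_ne_zero.mpr hWne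
    have hWinvne : (W : F)⁻¹ ≠ 0 := inv_ne_zero_of_coeIdeal hWne
    set U : F := ((W : F)⁻¹)⁻¹ with hUdef
    have hUu : IsUnit U := v_isUnit h hWne
    have hU1 : U * U⁻¹ = 1 := (mul_inv_cancel_iff_isUnit _).mpr hUu
    have hUne : U ≠ 0 := ne_zero_of_mul_eq_one _ _ hU1
    have hUinvne : U⁻¹ ≠ 0 := ne_zero_of_mul_eq_one _ _ (by rw [mul_comm]; exact hU1)
    have hUinvu : IsUnit U⁻¹ := IsUnit.of_mul_eq_one U (by rw [mul_comm]; exact hU1)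
    have hUdiv : (U⁻¹)⁻¹ = U :=
      (right_inverse_eq _ (U⁻¹) U (by rw [mul_comm]; exact hU1)).symm
    have hWleU : (W : F) ≤ U := le_v hWne' hWinvne
    -- the two integral quotient ideals
    have hP'le : ((T : Ideal R) : F) * U⁻¹ ≤ 1 := by
      calc ((T : Ideal R) : F) * U⁻¹ ≤ (W : F) * U⁻¹ :=
            mul_left_mono ((coeIdeal_le_coeIdeal _).mpr le_sup_left)
        _ ≤ U * U⁻¹ := mul_left_mono hWleU
        _ = 1 := hU1
    have hQ'le : ((N : Ideal R) : F) * U⁻¹ ≤ 1 := by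
      calc ((N : Ideal R) : F) * U⁻¹ ≤ (W : F) * U⁻¹ :=
            mul_left_mono ((coeIdeal_le_coeIdeal _).mpr le_sup_right)
        _ ≤ U * U⁻¹ := mul_left_mono hWleU
        _ = 1 := hU1
    obtain ⟨P₀, hP₀⟩ := le_one_iff_exists_coeIdeal.mp hP'le
    obtain ⟨Q₀, hQ₀⟩ := le_one_iff_exists_coeIdeal.mp hQ'le
    have hP₀u : IsUnit ((P₀ : F)) := by rw [hP₀]; exact hTu.mul hUinvu
    have hQ₀u : IsUnit ((Q₀ : F)) := by rw [hQ₀]; exact hNu.mul hUinvu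
    have hPQsup : ((P₀ ⊔ Q₀ : Ideal R) : F) = (W : F) * U⁻¹ := by
      rw [coeIdeal_sup, hP₀, hQ₀, ← add_mul, ← coeIdeal_sup]
    have hVne : (W : F) * U⁻¹ ≠ 0 := by
      intro h0
      apply hWne'
      calc (W : F) = (W : F) * (U⁻¹ * U) := by rw [mul_comm U⁻¹ U, hU1, mul_one]
        _ = ((W : F) * U⁻¹) * U := by ring
        _ = 0 := by rw [h0, zero_mul]
    have hVinv : ((W : F) * U⁻¹)⁻¹ ≤ 1 := by
      intro z hz
      by_cases hz0 : z = 0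
      · subst hz0
        exact zero_mem ((1 : F) : Submodule R (FractionRing R))
      have h1 : spanSingleton (nonZeroDivisors R) z ≤ ((W : F) * U⁻¹)⁻¹ :=
        spanSingleton_le_iff_mem.mpr hz
      have h2 : (spanSingleton (nonZeroDivisors R) z * ((W : F) * U⁻¹)) ≤ 1 := by
        rw [invE, FractionalIdeal.le_div_iff_mul_le hVne] at h1
        exact h1
      have h3 : spanSingleton (nonZeroDivisors R) z * (W : F) ≤ U := by
        rw [← hUdiv, invE U⁻¹, FractionalIdeal.le_div_iff_mul_le hUinvne]
        calc (spanSingleton (nonZeroDivisors R) z * (W : F)) * U⁻¹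
            = spanSingleton (nonZeroDivisors R) z * ((W : F) * U⁻¹) := by ring
          _ ≤ 1 := h2
      have hzWne : spanSingleton (nonZeroDivisors R) z * (W : F) ≠ 0 :=
        span_mul_ne_zero hz0 hWne'
      have h4 : U⁻¹ ≤ (spanSingleton (nonZeroDivisors R) z * (W : F))⁻¹ :=
        inv_anti_mono hzWne hUne h3
      rw [span_mul_inv hz0 hWne'] at h4
      have h5 : spanSingleton (nonZeroDivisors R) z * U⁻¹ ≤ (W : F)⁻¹ := by
        calc spanSingleton (nonZeroDivisors R) z * U⁻¹
            ≤ spanSingleton (nonZeroDivisors R) z * (spanSingleton (nonZeroDivisors R) z⁻¹ * (W : F)⁻¹) :=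
              mul_right_mono h4
          _ = (spanSingleton (nonZeroDivisors R) z * spanSingleton (nonZeroDivisors R) z⁻¹) * (W : F)⁻¹ := by
              ring
          _ = (W : F)⁻¹ := by
              rw [spanSingleton_mul_spanSingleton, mul_inv_cancel₀ hz0, spanSingleton_one, one_mul]
      have hzUne : spanSingleton (nonZeroDivisors R) z * U⁻¹ ≠ 0 :=
        span_mul_ne_zero hz0 hUinvne
      have h6 : ((W : F)⁻¹)⁻¹ ≤ (spanSingleton (nonZeroDivisors R) z * U⁻¹)⁻¹ :=
        inv_anti_mono hzUne hWinvne h5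
      rw [span_mul_inv hz0 hUinvne, hUdiv, ← hUdef] at h6
      have h7 : spanSingleton (nonZeroDivisors R) z * U ≤ U := by
        calc spanSingleton (nonZeroDivisors R) z * U
            ≤ spanSingleton (nonZeroDivisors R) z * (spanSingleton (nonZeroDivisors R) z⁻¹ * U) :=
              mul_right_mono h6
          _ = (spanSingleton (nonZeroDivisors R) z * spanSingleton (nonZeroDivisors R) z⁻¹) * U := by
              ring
          _ = U := by
              rw [spanSingleton_mul_spanSingleton, mul_inv_cancel₀ hz0, spanSingleton_one, one_mul]
      have h8 : spanSingleton (nonZeroDivisors R) z ≤ 1 := by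
        calc spanSingleton (nonZeroDivisors R) z
            = spanSingleton (nonZeroDivisors R) z * (U * U⁻¹) := by rw [hU1, mul_one]
          _ = (spanSingleton (nonZeroDivisors R) z * U) * U⁻¹ := by ring
          _ ≤ U * U⁻¹ := mul_left_mono h7
          _ = 1 := hU1
      exact spanSingleton_le_iff_mem.mp h8
    have htop : P₀ ⊔ Q₀ = ⊤ := sup_eq_top h hP₀u hQ₀u (by rw [hPQsup]; exact hVinv)
    have hWU : (W : F) * U⁻¹ = 1 := by
      rw [← hPQsup, htop, coeIdeal_top]
    exact IsUnit.of_mul_eq_one U⁻¹ hWU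

end SharpTVAux3

open SharpTVAux SharpTVAux2 SharpTVAux3

/-- A sharp TV domain (every `t`-ideal is a `v`-ideal) is a Dedekind domain. -/
theorem sharp_TV_dedekind (R : Type*) [CommRing R] [IsDomain R]
    (h : IsSharpDomain R)
    (hTV : ∀ I : Ideal R, I ≠ ⊥ →
      tClosure R I =
        ((I : FractionalIdeal (nonZeroDivisors R) (FractionRing R)) :
          Submodule R (FractionRing R)) →
      ((I : FractionalIdeal (nonZeroDivisors R) (FractionRing R))⁻¹)⁻¹ = I) :
    IsDedekindDomain R := by
  have inj : Function.Injective (algebraMap R (FractionRing R)) :=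
    IsFractionRing.injective R (FractionRing R)
  -- every nonzero ideal is invertible
  have allu : ∀ I : Ideal R, I ≠ ⊥ →
      IsUnit ((I : FractionalIdeal (nonZeroDivisors R) (FractionRing R))) := by
    intro I hI
    have htc : tClosure R I =
        ((I : FractionalIdeal (nonZeroDivisors R) (FractionRing R)) :
          Submodule R (FractionRing R)) := by
      unfold tClosure
      apply le_antisymm
      · refine iSup₂_le ?_
        rintro J ⟨hJfg, hJne, hJle⟩
        have hJu := fg_isUnit h J hJfg hJne
        have hJ1 : (J : FractionalIdeal (nonZeroDivisors R) (FractionRing R)) *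
            (J : FractionalIdeal (nonZeroDivisors R) (FractionRing R))⁻¹ = 1 :=
          (mul_inv_cancel_iff_isUnit _).mpr hJu
        have hJdiv : ((J : FractionalIdeal (nonZeroDivisors R) (FractionRing R))⁻¹)⁻¹ =
            (J : FractionalIdeal (nonZeroDivisors R) (FractionRing R)) :=
          (right_inverse_eq _ _ _ (by rw [mul_comm]; exact hJ1)).symm
        rw [hJdiv]
        exact FractionalIdeal.coe_le_coe.mpr ((coeIdeal_le_coeIdeal _).mpr hJle)
      · intro x hx
        have hx' : x ∈ (I : FractionalIdeal (nonZeroDivisors R) (FractionRing R)) := mem_coe.mp hx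
        obtain ⟨i, hiI, rfl⟩ := (mem_coeIdeal _).mp hx'
        by_cases hi0 : i = 0
        · subst hi0
          rw [_root_.map_zero]
          exact zero_mem _
        · have hspfg : (Ideal.span {i} : Ideal R).FG := ⟨{i}, by simp⟩
          have hspne : (Ideal.span {i} : Ideal R) ≠ ⊥ := by
            simpa [Ideal.span_singleton_eq_bot] using hi0
          have hsple : Ideal.span {i} ≤ I := (Ideal.span_le).mpr (by simpa using hiI)
          have hmem1 : algebraMap R (FractionRing R) i ∈
              ((Ideal.span {i} : Ideal R) :
                FractionalIdeal (nonZeroDivisors R) (FractionRing R)) :=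
            mem_coeIdeal_of_mem _ (Ideal.mem_span_singleton_self i)
          have hle2 := le_v (X := ((Ideal.span {i} : Ideal R) :
              FractionalIdeal (nonZeroDivisors R) (FractionRing R)))
            (coeIdeal_ne_zero.mpr hspne) (inv_ne_zero_of_coeIdeal hspne)
          have hmem2 : algebraMap R (FractionRing R) i ∈
              (((((Ideal.span {i} : Ideal R) :
                FractionalIdeal (nonZeroDivisors R) (FractionRing R))⁻¹)⁻¹ :
                FractionalIdeal (nonZeroDivisors R) (FractionRing R)) :
                  Submodule R (FractionRing R)) :=
            mem_coe.mpr (hle2 hmem1)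
          exact Submodule.mem_iSup_of_mem (Ideal.span {i})
            (Submodule.mem_iSup_of_mem ⟨hspfg, hspne, hsple⟩ hmem2)
    have hv := hTV I hI htc
    have hu := v_isUnit h hI
    rwa [hv] at hu
  rw [isDedekindDomain_iff_mul_inv_cancel (K := FractionRing R)]
  intro J hJ
  rw [mul_inv_cancel_iff_isUnit]
  obtain ⟨a, aJ, ha0, haeq⟩ := exists_eq_spanSingleton_mul J
  have halg : algebraMap R (FractionRing R) a ≠ 0 :=
    fun h0 => ha0 (inj (by simpa using h0))
  have haJne : aJ ≠ ⊥ := by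
    intro h0
    apply hJ
    rw [haeq, h0]
    simp
  have hspan : IsUnit (spanSingleton (nonZeroDivisors R)
      ((algebraMap R (FractionRing R) a)⁻¹)) :=
    IsUnit.of_mul_eq_one (spanSingleton (nonZeroDivisors R) (algebraMap R (FractionRing R) a))
      (by rw [spanSingleton_mul_spanSingleton, inv_mul_cancel₀ halg, spanSingleton_one])
  rw [haeq]
  exact hspan.mul (allu aJ haJne)
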